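/- Let g₁, …, g_m be vectors in ℝ^r such that the zero vector lies in the interior of the convex hull of {g₁, …, g_m}. Then there exists a unique λ ∈ ℝ^r satisfying 1 + ⟨λ, g_i⟩ > 0 for all i = 1, …, m and (1/m)·∑_{i=1}^m g_i/(1 + ⟨λ, g_i⟩) = 0. -/

import Mathlib

open scoped RealInnerProductSpace
open Finset

theorem el_sep {r m : ℕ} (g : Fin m → EuclideanSpace ℝ (Fin r))
    (h0 : (0 : EuclideanSpace ℝ (Fin r)) ∈ interior (convexHull ℝ (Set.range g))) :
    ∃ ε > (0:ℝ), ∀ u : EuclideanSpace ℝ (Fin r), u ≠ 0 → ∃ i, ⟪u, g i⟫ ≤ -ε * ‖u‖ := by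
  obtain ⟨ε, hε, hball⟩ := Metric.isOpen_iff.1 isOpen_interior 0 h0
  have hball' : Metric.ball (0 : EuclideanSpace ℝ (Fin r)) ε ⊆ convexHull ℝ (Set.range g) :=
    hball.trans interior_subset
  have hm : m ≠ 0 := by
    rintro rfl
    have := hball' (Metric.mem_ball_self hε)
    simp [Set.range_eq_empty, convexHull_empty] at this
  have : Nonempty (Fin m) := ⟨⟨0, Nat.pos_of_ne_zero hm⟩⟩
  refine ⟨ε/2, by positivity, fun u hu => ?_⟩
  have hun : ‖u‖ ≠ 0 := norm_ne_zero_iff.2 hu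
  have hun' : (0:ℝ) < ‖u‖ := norm_pos_iff.2 hu
  set p : EuclideanSpace ℝ (Fin r) := (-(ε/2) / ‖u‖) • u with hp
  have hpball : p ∈ Metric.ball (0 : EuclideanSpace ℝ (Fin r)) ε := by
    simp only [Metric.mem_ball, dist_zero_right, hp, norm_smul]
    rw [norm_div, Real.norm_eq_abs, Real.norm_eq_abs, abs_of_nonneg (norm_nonneg u),
      div_mul_cancel₀ _ hun]
    rw [abs_neg, abs_of_pos (by linarith : (0:ℝ) < ε/2)]
    linarith
  have hphull := hball' hpball
  set c : ℝ := univ.inf' univ_nonempty (fun i => ⟪u, g i⟫) with hc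
  have hconv : convexHull ℝ (Set.range g) ⊆ {x : EuclideanSpace ℝ (Fin r) | c ≤ ⟪u, x⟫} := by
    apply convexHull_min
    · rintro x ⟨i, rfl⟩
      show c ≤ ⟪u, g i⟫
      exact inf'_le _ (mem_univ i)
    · exact convex_halfSpace_ge ⟨fun x y => inner_add_right _ _ _,
        fun t x => real_inner_smul_right _ _ _⟩ c
  have hcp : c ≤ ⟪u, p⟫ := hconv hphull
  obtain ⟨i, -, hi⟩ := exists_mem_eq_inf' (univ_nonempty) (fun i => ⟪u, g i⟫)
  rw [← hc] at hi
  refine ⟨i, ?_⟩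
  have hup : ⟪u, p⟫ = -(ε/2) * ‖u‖ := by
    rw [hp, real_inner_smul_right, real_inner_self_eq_norm_sq]
    field_simp
  have : c ≤ -(ε/2) * ‖u‖ := hup ▸ hcp
  linarith [hi ▸ this]

theorem el_exists {r m : ℕ} (g : Fin m → EuclideanSpace ℝ (Fin r))
    (ε : ℝ) (hε : 0 < ε)
    (hsep : ∀ u : EuclideanSpace ℝ (Fin r), u ≠ 0 → ∃ i, ⟪u, g i⟫ ≤ -ε * ‖u‖) :
    ∃ lam : EuclideanSpace ℝ (Fin r), (∀ i, 0 < 1 + ⟪lam, g i⟫) ∧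
      ∑ i, (1 + ⟪lam, g i⟫)⁻¹ • g i = 0 := by
  classical
  set R : ℝ := 1 / ε with hR
  have hRpos : 0 < R := by positivity
  set h : EuclideanSpace ℝ (Fin r) → ℝ := fun x => ∏ i, max (1 + ⟪x, g i⟫) 0 with hh
  have hcont : Continuous h := by
    apply continuous_finset_prod
    intro i _
    exact (continuous_const.add (continuous_id.inner continuous_const)).max continuous_const
  have hK : IsCompact (Metric.closedBall (0 : EuclideanSpace ℝ (Fin r)) R) :=
    isCompact_closedBall _ _
  obtain ⟨lam, hlamK, hmax⟩ := hK.exists_isMaxOn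
    ⟨0, Metric.mem_closedBall_self hRpos.le⟩ hcont.continuousOn
  have h0 : h 0 = 1 := by simp [hh]
  have hlam1 : 1 ≤ h lam := by
    have h1 := hmax (Metric.mem_closedBall_self hRpos.le)
    simp only [Set.mem_setOf_eq, h0] at h1
    exact h1
  have hpos : ∀ i, 0 < 1 + ⟪lam, g i⟫ := by
    intro i
    by_contra hc
    push_neg at hc
    have : h lam = 0 := by
      apply Finset.prod_eq_zero (mem_univ i)
      exact max_eq_right hc
    linarith
  -- lam is in the open ball
  have hlt : ‖lam‖ < R := by
    rcases eq_or_ne lam 0 with rfl | hne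
    · simpa using hRpos
    · obtain ⟨i, hi⟩ := hsep lam hne
      have h1 := hpos i
      have hln : 0 < ‖lam‖ := norm_pos_iff.2 hne
      rw [hR, lt_div_iff₀ hε]
      nlinarith
  set a : Fin m → ℝ := fun i => ⟪lam, g i⟫ with ha
  have key : ∀ v : EuclideanSpace ℝ (Fin r), ∑ i, ⟪v, g i⟫ / (1 + a i) = 0 := by
    intro v
    set c : Fin m → ℝ := fun i => ⟪v, g i⟫ with hc
    set φ : ℝ → ℝ := fun t => ∑ i, Real.log (1 + a i + t * c i) with hφ
    have hder : HasDerivAt φ (∑ i, c i / (1 + a i)) 0 := by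
      have h1 : ∀ i ∈ univ, HasDerivAt (fun t : ℝ => Real.log (1 + a i + t * c i))
          (c i / (1 + a i + 0 * c i)) 0 := by
        intro i _
        exact ((hasDerivAt_mul_const (c i)).const_add (1 + a i)).log
          (by simpa using (hpos i).ne')
      have := HasDerivAt.fun_sum h1
      simpa using this
    have hev : ∀ᶠ t in nhds (0:ℝ),
        (∀ i, 0 < 1 + a i + t * c i) ∧ ‖lam + t • v‖ < R := by
      refine Filter.Eventually.and ?_ ?_
      · rw [Filter.eventually_all]
        intro i
        have htend : Filter.Tendsto (fun t : ℝ => 1 + a i + t * c i) (nhds 0)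
            (nhds (1 + a i + 0 * c i)) :=
          ((continuous_const.add (continuous_id.mul continuous_const)).tendsto 0)
        exact htend.eventually_const_lt (by simpa using hpos i)
      · have htend : Filter.Tendsto (fun t : ℝ => ‖lam + t • v‖) (nhds 0)
            (nhds ‖lam + (0:ℝ) • v‖) :=
          (((continuous_const.add (continuous_id.smul continuous_const)).norm).tendsto 0)
        exact htend.eventually_lt_const (by simpa using hlt)
    have hmaxφ : IsLocalMax φ 0 := by
      filter_upwards [hev] with t ht
      obtain ⟨htpos, htball⟩ := ht
      have hmem : lam + t • v ∈ Metric.closedBall (0 : EuclideanSpace ℝ (Fin r)) R := by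
        simpa [dist_eq_norm] using htball.le
      have hinner : ∀ i, ⟪lam + t • v, g i⟫ = a i + t * c i := by
        intro i
        rw [inner_add_left, real_inner_smul_left]
      have hfac : ∀ i, (0:ℝ) < 1 + ⟪lam + t • v, g i⟫ := by
        intro i; rw [hinner i]; linarith [htpos i]
      have hht : h (lam + t • v) = ∏ i, (1 + a i + t * c i) := by
        refine Finset.prod_congr rfl fun i _ => ?_
        rw [max_eq_left (hfac i).le, hinner i]
        ring
      have hhlam : h lam = ∏ i, (1 + a i) := by
        refine Finset.prod_congr rfl fun i _ => max_eq_left (hpos i).le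
      have hφt : φ t = Real.log (h (lam + t • v)) := by
        rw [hht, Real.log_prod (fun i _ => by nlinarith [htpos i])]
      have hφ0 : φ 0 = Real.log (h lam) := by
        rw [hhlam, Real.log_prod (fun i _ => (hpos i).ne')]
        show (∑ i, Real.log (1 + a i + 0 * c i)) = _
        simp only [zero_mul, add_zero]
        rfl
      rw [hφt, hφ0]
      have hpt : 0 < h (lam + t • v) := by
        rw [hht]; exact Finset.prod_pos fun i _ => htpos i
      have hplam : 0 < h lam := by rw [hhlam]; exact Finset.prod_pos fun i _ => hpos i
      exact (Real.log_le_log_iff hpt hplam).2 (hmax hmem)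
    have := hmaxφ.hasDerivAt_eq_zero hder
    simpa [hc] using this
  set S : EuclideanSpace ℝ (Fin r) := ∑ i, (1 + a i)⁻¹ • g i with hS
  have hSzero : S = 0 := by
    have hSS : ⟪S, S⟫ = 0 := by
      have := key S
      rw [hS, inner_sum]
      rw [← this]
      refine Finset.sum_congr rfl fun i _ => ?_
      rw [real_inner_smul_right, div_eq_inv_mul]
    exact inner_self_eq_zero.1 hSS
  exact ⟨lam, hpos, hSzero⟩

/-- **Existence and uniqueness of the empirical likelihood Lagrange multiplier.**
If the zero vector lies in the interior of the convex hull of `{g₁, …, g_m}`, then there is a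
unique `λ` with `1 + ⟨λ, gᵢ⟩ > 0` for all `i` solving the score equation
`(1/m)·∑ᵢ gᵢ/(1 + ⟨λ, gᵢ⟩) = 0`. -/
theorem el_lagrange_multiplier_exists_unique
    {r m : ℕ}
    (g : Fin m → EuclideanSpace ℝ (Fin r))
    (h0 : (0 : EuclideanSpace ℝ (Fin r)) ∈ interior (convexHull ℝ (Set.range g))) :
    ∃! lam : EuclideanSpace ℝ (Fin r),
      (∀ i, 0 < 1 + ⟪lam, g i⟫) ∧
        (1 / (m : ℝ)) • ∑ i, (1 + ⟪lam, g i⟫)⁻¹ • g i = 0 := by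
  obtain ⟨ε, hε, hsep⟩ := el_sep g h0
  have hm : m ≠ 0 := by
    rintro rfl
    have : (0 : EuclideanSpace ℝ (Fin r)) ∈ convexHull ℝ (Set.range g) :=
      interior_subset h0
    rw [Set.range_eq_empty, convexHull_empty] at this
    exact this
  have hm' : (1 / (m:ℝ)) ≠ 0 := by
    simp [Nat.cast_ne_zero.2 hm]
  obtain ⟨lam, hpos, hSzero⟩ := el_exists g ε hε hsep
  refine ⟨lam, ⟨hpos, by rw [hSzero, smul_zero]⟩, ?_⟩
  rintro y ⟨hy1, hy2⟩
  have hy2' : ∑ i, (1 + ⟪y, g i⟫)⁻¹ • g i = 0 :=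
    (smul_eq_zero.1 hy2).resolve_left hm'
  by_contra hne
  have hu : y - lam ≠ 0 := sub_ne_zero.2 hne
  set u : EuclideanSpace ℝ (Fin r) := y - lam with hudef
  set a : Fin m → ℝ := fun i => ⟪lam, g i⟫ with ha
  set b : Fin m → ℝ := fun i => ⟪y, g i⟫ with hb
  have hug : ∀ i, ⟪u, g i⟫ = b i - a i := fun i => inner_sub_left _ _ _
  have h1 : ∑ i, (1 + a i)⁻¹ * ⟪u, g i⟫ = 0 := by
    have : ⟪u, ∑ i, (1 + a i)⁻¹ • g i⟫ = (0:ℝ) := by rw [hSzero, inner_zero_right]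
    rw [inner_sum] at this
    rw [← this]
    exact Finset.sum_congr rfl fun i _ => (real_inner_smul_right _ _ _).symm
  have h2 : ∑ i, (1 + b i)⁻¹ * ⟪u, g i⟫ = 0 := by
    have : ⟪u, ∑ i, (1 + b i)⁻¹ • g i⟫ = (0:ℝ) := by rw [hy2', inner_zero_right]
    rw [inner_sum] at this
    rw [← this]
    exact Finset.sum_congr rfl fun i _ => (real_inner_smul_right _ _ _).symm
  have h3 : ∑ i, (b i - a i)^2 * ((1 + a i) * (1 + b i))⁻¹ = 0 := by
    have := sub_eq_zero.2 (h1.trans h2.symm)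
    rw [← Finset.sum_sub_distrib] at this
    rw [← this]
    refine Finset.sum_congr rfl fun i _ => ?_
    rw [hug i]
    have hai : 1 + a i ≠ 0 := (hpos i).ne'
    have hbi : 1 + b i ≠ 0 := (hy1 i).ne'
    field_simp
    ring
  have h4 : ∀ i ∈ univ, (b i - a i)^2 * ((1 + a i) * (1 + b i))⁻¹ = 0 := by
    rw [← Finset.sum_eq_zero_iff_of_nonneg]
    · exact h3
    · intro i _
      have := mul_pos (hpos i) (hy1 i)
      positivity
  obtain ⟨i, hi⟩ := hsep u hu
  have hzero : b i - a i = 0 := by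
    have h5 := h4 i (mem_univ i)
    have := mul_pos (hpos i) (hy1 i)
    have h6 : (b i - a i)^2 = 0 := by
      rcases mul_eq_zero.1 h5 with h | h
      · exact h
      · exact absurd h (by positivity)
    exact pow_eq_zero_iff (by norm_num) |>.1 h6
  rw [hug i, hzero] at hi
  have : (0:ℝ) < ε * ‖u‖ := mul_pos hε (norm_pos_iff.2 hu)
  linarith
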